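/- With Γ, M, 𝚟, Γ⁻¹ as above and z_A(v) = 0 for v < Γ⁻¹(M/e), z_A(v) = 1 - M/(e·Γ(v)) for Γ⁻¹(M/e) ≤ v ≤ 𝚟, z_A(v) = 1 - 1/e for v > 𝚟, Bob's posted-price revenue Γ(q)·(1 - z_A(q)) equals: Γ(q) if q < Γ⁻¹(M/e); M/e if Γ⁻¹(M/e) ≤ q ≤ 𝚟; and Γ(q)/e if q > 𝚟. In particular it is maximized (with value M/e) at q = 𝚟. -/

import Mathlib

/-- Bob's posted-price revenue `R(q) = Γ(q)·(1 - z_A(q))` against Alice's mechanism with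
allocation rule `z_A(v) = 0` for `v < Γ⁻¹(M/e)`, `z_A(v) = 1 - M/(e·Γ(v))` for
`Γ⁻¹(M/e) ≤ v ≤ 𝚟`, and `z_A(v) = 1 - 1/e` for `v > 𝚟`, equals `Γ(q)` in the first
range, `M/e` in the second, and `Γ(q)/e` in the third; in particular `R(q) ≤ M/e` for
all `q ≥ 0`, with equality on `[Γ⁻¹(M/e), 𝚟]`. -/
theorem bob_posted_price_revenue
    (Γ Γinv zA : ℝ → ℝ) (vMye M : ℝ) (hM : 0 < M) (hvMye : 0 < vMye)
    (hΓnonneg : ∀ q, 0 ≤ q → 0 ≤ Γ q)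
    (hΓmax : ∀ q, Γ q ≤ M) (hΓv : Γ vMye = M)
    (hcont : ContinuousOn Γ (Set.Icc 0 vMye))
    (hmono : StrictMonoOn Γ (Set.Icc 0 vMye))
    (h0 : Γ 0 = 0)
    (hinv1 : ∀ y ∈ Set.Icc (0:ℝ) M, Γinv y ∈ Set.Icc 0 vMye ∧ Γ (Γinv y) = y)
    (hinv2 : ∀ v ∈ Set.Icc (0:ℝ) vMye, Γinv (Γ v) = v)
    (hzA : ∀ q, zA q =
      if q < Γinv (M / Real.exp 1) then 0
      else if q ≤ vMye then 1 - M / (Real.exp 1 * Γ q)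
      else 1 - 1 / Real.exp 1) :
    (∀ q, 0 ≤ q → Γ q * (1 - zA q) =
      if q < Γinv (M / Real.exp 1) then Γ q
      else if q ≤ vMye then M / Real.exp 1
      else Γ q / Real.exp 1) ∧
    (∀ q, 0 ≤ q → Γ q * (1 - zA q) ≤ M / Real.exp 1) ∧
    (∀ q ∈ Set.Icc (Γinv (M / Real.exp 1)) vMye,
      Γ q * (1 - zA q) = M / Real.exp 1) := by
  have he : (0:ℝ) < Real.exp 1 := Real.exp_pos 1
  have he1 : (1:ℝ) < Real.exp 1 := by
    have := Real.add_one_le_exp (1:ℝ); linarith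
  have hMe : M / Real.exp 1 ∈ Set.Icc (0:ℝ) M := by
    constructor
    · positivity
    · rw [div_le_iff₀ he]; nlinarith
  obtain ⟨ht, hΓt⟩ := hinv1 (M / Real.exp 1) hMe
  set t := Γinv (M / Real.exp 1) with htdef
  have key : ∀ q, 0 ≤ q → Γ q * (1 - zA q) =
      if q < t then Γ q
      else if q ≤ vMye then M / Real.exp 1
      else Γ q / Real.exp 1 := by
    intro q hq
    rw [hzA q]
    split_ifs with h1 h2
    · ring
    · push_neg at h1
      have hΓq : M / Real.exp 1 ≤ Γ q := by
        rw [← hΓt]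
        exact hmono.monotoneOn ht ⟨hq, h2⟩ h1
      have hΓqpos : 0 < Γ q := lt_of_lt_of_le (by positivity) hΓq
      field_simp
      ring
    · field_simp
      ring
  refine ⟨key, ?_, ?_⟩
  · intro q hq
    rw [key q hq]
    split_ifs with h1 h2
    · have h3 : Γ q < Γ t := hmono ⟨hq, le_trans h1.le ht.2⟩ ht h1
      rw [hΓt] at h3
      exact h3.le
    · exact le_rfl
    · gcongr
      exact hΓmax q
  · intro q hq
    have hq0 : 0 ≤ q := le_trans ht.1 hq.1
    rw [key q hq0]
    rw [if_neg (not_lt.2 hq.1), if_pos hq.2]
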